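/- Let X and Y be Banach spaces and let ψ, φ : B(X) → B(Y) be algebra homomorphisms with ‖ψ(A) − φ(A)‖ < ‖A‖ for every non-zero A ∈ B(X). If P ∈ B(X) is an idempotent of norm one, then ψ(P) = 0 if and only if φ(P) = 0. Consequently, ψ is injective if and only if φ is injective. -/

import Mathlib

open ContinuousLinearMap

private lemma idem_small {Y : Type*} [NormedAddCommGroup Y] [NormedSpace ℂ Y]
    {e : Y →L[ℂ] Y} (he : IsIdempotentElem e) (h : ‖e‖ < 1) : e = 0 := by
  by_contra h0
  have h1 : (0:ℝ) < ‖e‖ := norm_pos_iff.mpr h0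
  have h2 : ‖e‖ ≤ ‖e‖ * ‖e‖ := by
    conv_lhs => rw [← he]
    exact norm_mul_le e e
  nlinarith

private lemma kernel_idem {X Y : Type*}
    [NormedAddCommGroup X] [NormedSpace ℂ X]
    [NormedAddCommGroup Y] [NormedSpace ℂ Y]
    (ψ φ : (X →L[ℂ] X) →ₙₐ[ℂ] (Y →L[ℂ] Y))
    (hclose : ∀ A : X →L[ℂ] X, A ≠ 0 → ‖ψ A - φ A‖ < ‖A‖)
    (P : X →L[ℂ] X) (hP : IsIdempotentElem P) (hPn : ‖P‖ = 1) (h : ψ P = 0) :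
    φ P = 0 := by
  have hP0 : P ≠ 0 := by intro h'; simp [h'] at hPn
  have hlt : ‖ψ P - φ P‖ < ‖P‖ := hclose P hP0
  rw [h, zero_sub, norm_neg, hPn] at hlt
  have hidem : IsIdempotentElem (φ P) := by
    unfold IsIdempotentElem
    rw [← map_mul, hP]
  exact idem_small hidem hlt

private lemma inj_step {X Y : Type*}
    [NormedAddCommGroup X] [NormedSpace ℂ X] [CompleteSpace X]
    [NormedAddCommGroup Y] [NormedSpace ℂ Y]
    (ψ φ : (X →L[ℂ] X) →ₙₐ[ℂ] (Y →L[ℂ] Y))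
    (hclose : ∀ A : X →L[ℂ] X, A ≠ 0 → ‖ψ A - φ A‖ < ‖A‖)
    (hψ : Function.Injective ψ) : Function.Injective φ := by
  rw [injective_iff_map_eq_zero] at hψ ⊢
  intro A hA
  by_contra hA0
  obtain ⟨x, hx⟩ : ∃ x, A x ≠ 0 := by
    by_contra h; push_neg at h; exact hA0 (ContinuousLinearMap.ext h)
  obtain ⟨g, hg1, hg2⟩ := exists_dual_vector ℂ (A x) (norm_ne_zero_iff.mpr hx)
  have hAx : (0:ℝ) < ‖A x‖ := norm_pos_iff.mpr hx
  set c : ℂ := (‖A x‖ : ℂ)⁻¹ with hc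
  set g' : X →L[ℂ] ℂ := c • g with hg'
  have hgAx : g' (A x) = 1 := by
    have : ((‖A x‖ : ℂ)) ≠ 0 := by
      simpa using hAx.ne'
    simp [hg', hc, hg2, inv_mul_cancel₀ this]
  set T : X →L[ℂ] X := g'.smulRight x with hT
  set P : X →L[ℂ] X := g'.smulRight (A x) with hPdef
  have hPmul : P = A * T := by
    ext y
    simp [hPdef, hT, ContinuousLinearMap.mul_apply, smulRight_apply, map_smul]
  have hPidem : IsIdempotentElem P := by
    unfold IsIdempotentElem
    ext y
    simp [hPdef, ContinuousLinearMap.mul_apply, smulRight_apply, map_smul, hgAx,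
      smul_smul]
  have hPnorm : ‖P‖ = 1 := by
    have h1 : ‖P‖ = ‖g'‖ * ‖A x‖ := norm_smulRight_apply g' (A x)
    have h2 : ‖g'‖ = ‖A x‖⁻¹ := by
      have hns := norm_smul ((‖A x‖:ℂ)⁻¹) g
      rw [hg', hc, hns, hg1, mul_one, norm_inv]
      simp [abs_of_pos hAx]
    rw [h1, h2, inv_mul_cancel₀ hAx.ne']
  have hφP : φ P = 0 := by
    rw [hPmul, map_mul, hA, zero_mul]
  have hclose' : ∀ A : X →L[ℂ] X, A ≠ 0 → ‖φ A - ψ A‖ < ‖A‖ := by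
    intro B hB; rw [norm_sub_rev]; exact hclose B hB
  have hψP : ψ P = 0 := kernel_idem φ ψ hclose' P hPidem hPnorm hφP
  have : P = 0 := hψ P hψP
  rw [this, norm_zero] at hPnorm
  norm_num at hPnorm

theorem kernel_idempotents_and_injectivity_stable
    {X Y : Type*}
    [NormedAddCommGroup X] [NormedSpace ℂ X] [CompleteSpace X]
    [NormedAddCommGroup Y] [NormedSpace ℂ Y] [CompleteSpace Y]
    (ψ φ : (X →L[ℂ] X) →ₙₐ[ℂ] (Y →L[ℂ] Y))
    (hclose : ∀ A : X →L[ℂ] X, A ≠ 0 → ‖ψ A - φ A‖ < ‖A‖) :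
    (∀ P : X →L[ℂ] X, IsIdempotentElem P → ‖P‖ = 1 → (ψ P = 0 ↔ φ P = 0)) ∧
      (Function.Injective ψ ↔ Function.Injective φ) := by
  have hclose' : ∀ A : X →L[ℂ] X, A ≠ 0 → ‖φ A - ψ A‖ < ‖A‖ := by
    intro B hB; rw [norm_sub_rev]; exact hclose B hB
  refine ⟨fun P hP hPn => ⟨kernel_idem ψ φ hclose P hP hPn,
      kernel_idem φ ψ hclose' P hP hPn⟩,
    ⟨inj_step ψ φ hclose, inj_step φ ψ hclose'⟩⟩
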